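/- A triangle-free simple graph on 7 vertices with degree sequence consisting of three vertices of degree 4 and four vertices of degree 3 contains no odd cycle, i.e., is bipartite. -/
import Mathlib


open SimpleGraph

/-- Two edges (as unordered pairs) share a vertex. -/
def sharesVertex {V : Type*} (e₁ e₂ : Sym2 V) : Prop := ∃ v, v ∈ e₁ ∧ v ∈ e₂

/-- A proper edge coloring of `G` with colors in `α`: edges of `G` sharing a vertex
receive distinct colors. -/
def IsProperEdgeColoring {V α : Type*} (G : SimpleGraph V) (c : Sym2 V → α) : Prop :=
  ∀ e₁ ∈ G.edgeSet, ∀ e₂ ∈ G.edgeSet, e₁ ≠ e₂ → sharesVertex e₁ e₂ → c e₁ ≠ c e₂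

/-- The chromatic index `χ'(G)`: the least `k` admitting a proper edge coloring
with `k` colors. -/
noncomputable def chromaticIndex {V : Type*} (G : SimpleGraph V) : ℕ :=
  sInf {k | ∃ c : Sym2 V → Fin k, IsProperEdgeColoring G c}

/-- A finite set of edges of `G` forming a matching (pairwise non-adjacent edges). -/
def IsMatchingSet {V : Type*} (G : SimpleGraph V) (M : Finset (Sym2 V)) : Prop :=
  ↑M ⊆ G.edgeSet ∧ ∀ e₁ ∈ M, ∀ e₂ ∈ M, e₁ ≠ e₂ → ¬ sharesVertex e₁ e₂

/-- The matching number `α'(G)`: maximum cardinality of a matching. -/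
noncomputable def matchingNumber {V : Type*} (G : SimpleGraph V) : ℕ :=
  sSup {k | ∃ M : Finset (Sym2 V), IsMatchingSet G M ∧ M.card = k}

lemma walk_parity {V : Type*} {G : SimpleGraph V} (c : V → ZMod 2)
    (hc : ∀ ⦃u v⦄, G.Adj u v → c u ≠ c v) :
    ∀ {u v : V} (w : G.Walk u v), c v = c u + w.length := by
  intro u v w
  induction w with
  | nil => simp
  | @cons a b d h p ih =>
    have hb : c b = c a + 1 := by
      have h1 := hc h
      revert h1; generalize c a = x; generalize c b = y
      revert x y; decide
    rw [SimpleGraph.Walk.length_cons, ih, hb]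
    push_cast
    ring

/-- A triangle-free simple graph on 7 vertices with three vertices of degree 4 and
four of degree 3 contains no odd cycle, i.e. is bipartite. -/
theorem no_odd_cycle_bipartite (G : SimpleGraph (Fin 7)) [DecidableRel G.Adj]
    (htf : G.CliqueFree 3)
    (h4 : (Finset.univ.filter fun v => G.degree v = 4).card = 3)
    (h3 : (Finset.univ.filter fun v => G.degree v = 3).card = 4) :
    (∀ (v : Fin 7) (w : G.Walk v v), w.IsCycle → ¬ Odd w.length) ∧ G.Colorable 2 := by
  classical
  have hdeg : ∀ v : Fin 7, G.degree v = 4 ∨ G.degree v = 3 := by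
    by_contra hcon
    push_neg at hcon
    obtain ⟨v, hv4, hv3⟩ := hcon
    have hdisj : Disjoint (Finset.univ.filter fun v => G.degree v = 4)
        (Finset.univ.filter fun v => G.degree v = 3) := by
      rw [Finset.disjoint_left]
      intro x hx hx'
      simp only [Finset.mem_filter] at hx hx'
      omega
    have hsub : (Finset.univ.filter fun v => G.degree v = 4) ∪
        (Finset.univ.filter fun v => G.degree v = 3) ⊆ Finset.univ \ {v} := by
      intro x hx
      simp only [Finset.mem_union, Finset.mem_filter, Finset.mem_univ, true_and] at hx
      simp only [Finset.mem_sdiff, Finset.mem_univ, Finset.mem_singleton, true_and]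
      rintro rfl
      rcases hx with h | h <;> [exact hv4 h; exact hv3 h]
    have hcard := Finset.card_le_card hsub
    rw [Finset.card_union_of_disjoint hdisj, h4, h3] at hcard
    have : (Finset.univ \ {v} : Finset (Fin 7)).card = 6 := by
      rw [Finset.card_sdiff_of_subset (by simp)]
      simp
    omega
  have hAA : ∀ u v : Fin 7, G.degree u = 4 → G.degree v = 4 → ¬ G.Adj u v := by
    intro u v hu hv hadj
    have hdisjN : Disjoint (G.neighborFinset u) (G.neighborFinset v) := by
      rw [Finset.disjoint_left]
      intro w hwu hwv
      rw [SimpleGraph.mem_neighborFinset] at hwu hwv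
      exact htf {u, v, w} (SimpleGraph.is3Clique_triple_iff.mpr ⟨hadj, hwu, hwv⟩)
    have h8 : (G.neighborFinset u ∪ G.neighborFinset v).card = 8 := by
      rw [Finset.card_union_of_disjoint hdisjN]
      rw [SimpleGraph.card_neighborFinset_eq_degree, SimpleGraph.card_neighborFinset_eq_degree,
        hu, hv]
    have := Finset.card_le_univ (G.neighborFinset u ∪ G.neighborFinset v)
    rw [h8] at this
    simp at this
  have hNA : ∀ a : Fin 7, G.degree a = 4 →
      G.neighborFinset a = Finset.univ.filter (fun v => G.degree v = 3) := by
    intro a ha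
    apply Finset.eq_of_subset_of_card_le
    · intro w hw
      rw [SimpleGraph.mem_neighborFinset] at hw
      rcases hdeg w with h | h
      · exact absurd hw (hAA a w ha h)
      · simp [h]
    · rw [h3, SimpleGraph.card_neighborFinset_eq_degree, ha]
  have hAB : ∀ a b : Fin 7, G.degree a = 4 → G.degree b = 3 → G.Adj a b := by
    intro a b ha hb
    have : b ∈ G.neighborFinset a := by
      rw [hNA a ha]
      simp [hb]
    rwa [SimpleGraph.mem_neighborFinset] at this
  have hBB : ∀ u v : Fin 7, G.degree u = 3 → G.degree v = 3 → ¬ G.Adj u v := by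
    intro u v hu hv hadj
    have hNb : Finset.univ.filter (fun x => G.degree x = 4) ⊆ G.neighborFinset u := by
      intro a ha
      simp only [Finset.mem_filter, Finset.mem_univ, true_and] at ha
      rw [SimpleGraph.mem_neighborFinset]
      exact (hAB a u ha hu).symm
    have heq : Finset.univ.filter (fun x => G.degree x = 4) = G.neighborFinset u := by
      apply Finset.eq_of_subset_of_card_le hNb
      rw [h4, SimpleGraph.card_neighborFinset_eq_degree, hu]
    have : v ∈ G.neighborFinset u := by rwa [SimpleGraph.mem_neighborFinset]
    rw [← heq] at this
    simp only [Finset.mem_filter, Finset.mem_univ, true_and] at this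
    omega
  set c : Fin 7 → ZMod 2 := fun v => if G.degree v = 4 then 0 else 1 with hcdef
  have hc : ∀ ⦃u v : Fin 7⦄, G.Adj u v → c u ≠ c v := by
    intro u v hadj
    rcases hdeg u with hu | hu <;> rcases hdeg v with hv | hv
    · exact absurd hadj (hAA u v hu hv)
    · simp [hcdef, hu, hv]
    · simp [hcdef, hu, hv]
    · exact absurd hadj (hBB u v hu hv)
  constructor
  · intro v w _ hodd
    have hpar := walk_parity c hc w
    have h0 : ((w.length : ZMod 2)) = 0 := by
      have := hpar.symm
      rwa [add_eq_left] at this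
    obtain ⟨k, hk⟩ := hodd
    rw [hk] at h0
    push_cast at h0
    simp [show ((2 : ZMod 2)) = 0 from rfl] at h0
  · have hcol := (SimpleGraph.Coloring.mk c (fun {u v} h => hc h) : G.Coloring (ZMod 2)).colorable
    simpa using hcol
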